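/- Let K be a field of characteristic zero and f ∈ K[x₀,…,x_N] homogeneous of degree 3 with linearly independent partial derivatives, and let A = Q/Ann_f. For a linear form L = a₀X₀ + … + a_NX_N ∈ A₁, the multiplication map L: A₁ → A₂ is an isomorphism if and only if the Hessian determinant of f does not vanish at the point (a₀,…,a_N). -/

import Mathlib

open MvPolynomial

/-- The action of a polynomial differential operator `α ∈ Q = K[X₀,…,X_N]` on
`f ∈ R = K[x₀,…,x_N]`, where the variable `Xᵢ` acts as `∂/∂xᵢ`. -/
noncomputable def applyOp {K : Type*} [CommSemiring K] {n : ℕ}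
    (α f : MvPolynomial (Fin n) K) : MvPolynomial (Fin n) K :=
  ∑ m ∈ α.support,
    α.coeff m •
      ((List.ofFn fun i : Fin n =>
          ((pderiv i).toLinearMap ^ m i : Module.End K (MvPolynomial (Fin n) K))).prod f)

section Aux

variable {K : Type*} [CommSemiring K] {n : ℕ}


lemma hd_comm (m : Fin n →₀ ℕ) (i j : Fin n) :
    m - Finsupp.single j 1 - Finsupp.single i 1 = m - Finsupp.single i 1 - Finsupp.single j 1 := by
  ext k
  simp only [Finsupp.tsub_apply, Finsupp.single_apply]
  split_ifs <;> omega

lemma coeff_comm (m : Fin n →₀ ℕ) {i j : Fin n} (hij : i ≠ j) (c : K) :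
    c * (m j : K) * ((m - Finsupp.single j 1 : Fin n →₀ ℕ) i : ℕ)
      = c * (m i : K) * ((m - Finsupp.single i 1 : Fin n →₀ ℕ) j : ℕ) := by
  have h1 : (m - Finsupp.single j 1 : Fin n →₀ ℕ) i = m i := by
    simp [Finsupp.tsub_apply, Finsupp.single_apply, Ne.symm hij]
  have h2 : (m - Finsupp.single i 1 : Fin n →₀ ℕ) j = m j := by
    simp [Finsupp.tsub_apply, Finsupp.single_apply, hij]
  rw [h1, h2]; ring

lemma pderiv_comm' (i j : Fin n) (f : MvPolynomial (Fin n) K) :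
    pderiv i (pderiv j f) = pderiv j (pderiv i f) := by
  have key : ∀ (m : Fin n →₀ ℕ) (c : K), pderiv i (pderiv j (monomial m c))
      = pderiv j (pderiv i (monomial m c)) := by
    intro m c
    rcases eq_or_ne i j with rfl | hij
    · rfl
    rw [pderiv_monomial, pderiv_monomial, pderiv_monomial, pderiv_monomial,
      hd_comm, coeff_comm m hij]
  conv_lhs => rw [f.as_sum]
  conv_rhs => rw [f.as_sum]
  rw [map_sum, map_sum, map_sum, map_sum]
  exact Finset.sum_congr rfl fun m _ => key m _

section Lists
variable {M : Type*} [Monoid M]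

lemma ofFn_prod_single : ∀ {n : ℕ} (g : Fin n → M) (i : Fin n),
    (∀ j, j ≠ i → g j = 1) → (List.ofFn g).prod = g i := by
  intro n
  induction n with
  | zero => exact fun g i => i.elim0
  | succ n ih =>
    intro g i h
    rw [List.ofFn_succ, List.prod_cons]
    rcases Fin.eq_zero_or_eq_succ i with rfl | ⟨i', rfl⟩
    · have : ∀ x ∈ List.ofFn (fun j : Fin n => g j.succ), x = 1 := by
        intro x hx
        rw [List.mem_ofFn] at hx
        obtain ⟨j, rfl⟩ := hx
        exact h _ (Fin.succ_ne_zero j)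
      rw [List.prod_eq_one this, mul_one]
    · rw [h 0 (Fin.succ_ne_zero i').symm, one_mul]
      exact ih _ i' fun j hj => h j.succ (by simpa using hj)

lemma ofFn_prod_pair : ∀ {n : ℕ} (g : Fin n → M) (i j : Fin n), i < j →
    (∀ k, k ≠ i → k ≠ j → g k = 1) → (List.ofFn g).prod = g i * g j := by
  intro n
  induction n with
  | zero => exact fun g i => i.elim0
  | succ n ih =>
    intro g i j hij h
    rw [List.ofFn_succ, List.prod_cons]
    rcases Fin.eq_zero_or_eq_succ j with rfl | ⟨j', rfl⟩
    · exact absurd hij (by simp [Fin.not_lt, Fin.zero_le])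
    rcases Fin.eq_zero_or_eq_succ i with rfl | ⟨i', rfl⟩
    · rw [ofFn_prod_single (fun k : Fin n => g k.succ) j'
        (fun k hk => h k.succ (Fin.succ_ne_zero k) (by simpa using hk))]
    · rw [h 0 (Fin.succ_ne_zero i').symm (Fin.succ_ne_zero j').symm, one_mul]
      exact ih _ i' j' (by simpa using hij)
        (fun k hk1 hk2 => h k.succ (by simpa using hk1) (by simpa using hk2))
end Lists


noncomputable def opD (m : Fin n →₀ ℕ) : Module.End K (MvPolynomial (Fin n) K) :=
  (List.ofFn fun i : Fin n => ((pderiv i).toLinearMap ^ m i)).prod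

lemma applyOp_eq (α f : MvPolynomial (Fin n) K) :
    applyOp α f = Finsupp.sum (AddMonoidAlgebra.coeff α) fun m c => c • opD m f := rfl

lemma applyOp_monomial (m : Fin n →₀ ℕ) (c : K) (f : MvPolynomial (Fin n) K) :
    applyOp (monomial m c) f = c • opD m f := by
  rw [applyOp_eq]
  exact Finsupp.sum_single_index (by simp)

lemma applyOp_add (p q f : MvPolynomial (Fin n) K) :
    applyOp (p + q) f = applyOp p f + applyOp q f := by
  rw [applyOp_eq, applyOp_eq, applyOp_eq]
  exact Finsupp.sum_add_index' (by simp) (by intros; rw [add_smul])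

lemma applyOp_smul (c : K) (p f : MvPolynomial (Fin n) K) :
    applyOp (c • p) f = c • applyOp p f := by
  rw [applyOp_eq, applyOp_eq, Finsupp.smul_sum]
  refine Finsupp.sum_smul_index' ?_ |>.trans ?_
  · simp
  · simp [mul_smul]

lemma applyOp_sum {ι : Type*} (s : Finset ι) (g : ι → MvPolynomial (Fin n) K)
    (f : MvPolynomial (Fin n) K) :
    applyOp (∑ i ∈ s, g i) f = ∑ i ∈ s, applyOp (g i) f := by
  classical
  induction s using Finset.induction with
  | empty => simp [applyOp_eq]
  | insert _ _ hx ih => rw [Finset.sum_insert hx, Finset.sum_insert hx, applyOp_add, ih]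

lemma opD_single (i : Fin n) (f : MvPolynomial (Fin n) K) :
    opD (Finsupp.single i 1) f = pderiv i f := by
  have h : opD (K := K) (n := n) (Finsupp.single i 1) = (pderiv i).toLinearMap := by
    refine (ofFn_prod_single _ i fun j hj => ?_).trans ?_
    · rw [Finsupp.single_apply, if_neg fun h => hj (by simp [h]), pow_zero]
    · rw [Finsupp.single_apply, if_pos rfl, pow_one]
  rw [h]; rfl

lemma opD_pair (i j : Fin n) (f : MvPolynomial (Fin n) K) :
    opD (Finsupp.single i 1 + Finsupp.single j 1) f = pderiv i (pderiv j f) := by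
  rcases eq_or_ne i j with rfl | hij
  · have h : Finsupp.single i 1 + Finsupp.single i 1 = Finsupp.single i 2 := by
      rw [← Finsupp.single_add]
    rw [h]
    have h2 : opD (K := K) (n := n) (Finsupp.single i 2) = (pderiv i).toLinearMap ^ 2 := by
      refine (ofFn_prod_single _ i fun j hj => ?_).trans ?_
      · rw [Finsupp.single_apply, if_neg fun h => hj (by simp [h]), pow_zero]
      · rw [Finsupp.single_apply, if_pos rfl]
    rw [h2, pow_two, Module.End.mul_apply]; rfl
  · have key : ∀ k, k ≠ i → k ≠ j →
        ((pderiv k).toLinearMap : Module.End K (MvPolynomial (Fin n) K))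
          ^ ((Finsupp.single i 1 + Finsupp.single j 1 : Fin n →₀ ℕ) k) = 1 := by
      intro k hk1 hk2
      rw [Finsupp.add_apply, Finsupp.single_apply, Finsupp.single_apply,
        if_neg fun h => hk1 (by simp [h]), if_neg fun h => hk2 (by simp [h])]
      simp
    have hi : ((Finsupp.single i 1 + Finsupp.single j 1 : Fin n →₀ ℕ) i) = 1 := by
      simp [Finsupp.single_apply, Ne.symm hij]
    have hj : ((Finsupp.single i 1 + Finsupp.single j 1 : Fin n →₀ ℕ) j) = 1 := by
      simp [Finsupp.single_apply, hij]
    rcases lt_or_gt_of_ne hij with h | h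
    · rw [opD, ofFn_prod_pair _ i j h key]
      simp only [hi, hj, pow_one, Module.End.mul_apply]
      rfl
    · rw [opD, ofFn_prod_pair _ j i h (fun k hk1 hk2 => key k hk2 hk1)]
      simp only [hi, hj, pow_one, Module.End.mul_apply]
      exact (pderiv_comm' i j f).symm

lemma degree_add' (p q : Fin n →₀ ℕ) : (p + q).degree = p.degree + q.degree := by
  rw [Finsupp.degree_eq_weight_one, map_add]

lemma degree_single' (i : Fin n) (k : ℕ) : (Finsupp.single i k).degree = k := by
  rcases eq_or_ne k 0 with rfl | hk
  · simp
  · exact Finsupp.degree_single i k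

lemma degree_one_eq {m : Fin n →₀ ℕ} (h : m.degree = 1) :
    ∃ i, m = Finsupp.single i 1 := by
  have hne : m ≠ 0 := by rintro rfl; simp [map_zero] at h
  obtain ⟨i, hi⟩ := Finsupp.support_nonempty_iff.mpr hne
  have hmi : 1 ≤ m i := Nat.one_le_iff_ne_zero.mpr (Finsupp.mem_support_iff.mp hi)
  refine ⟨i, ?_⟩
  have hsum : m i + ∑ x ∈ m.support.erase i, m x = m.degree := Finset.add_sum_erase _ _ hi
  have hrest : ∑ x ∈ m.support.erase i, m x = 0 := by omega
  ext j
  rcases eq_or_ne j i with rfl | hji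
  · rw [Finsupp.single_apply, if_pos rfl]; omega
  · rw [Finsupp.single_apply, if_neg (Ne.symm hji)]
    by_contra hj
    have hjs : j ∈ m.support.erase i := Finset.mem_erase.mpr ⟨hji, Finsupp.mem_support_iff.mpr hj⟩
    have hle : m j ≤ ∑ x ∈ m.support.erase i, m x :=
      Finset.single_le_sum (fun _ _ => Nat.zero_le _) hjs
    omega

lemma degree_two_eq {m : Fin n →₀ ℕ} (h : m.degree = 2) :
    ∃ i j, m = Finsupp.single i 1 + Finsupp.single j 1 := by
  have hne : m ≠ 0 := by rintro rfl; simp [map_zero] at h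
  obtain ⟨i, hi⟩ := Finsupp.support_nonempty_iff.mpr hne
  have hmi : 1 ≤ m i := Nat.one_le_iff_ne_zero.mpr (Finsupp.mem_support_iff.mp hi)
  have hm : m = Finsupp.single i 1 + (m - Finsupp.single i 1) := by
    ext j
    rw [Finsupp.add_apply, Finsupp.tsub_apply, Finsupp.single_apply]
    split_ifs with hj
    · subst hj; omega
    · omega
  have hdeg : (m - Finsupp.single i 1 : Fin n →₀ ℕ).degree = 1 := by
    have := degree_add' (Finsupp.single i 1) (m - Finsupp.single i 1)
    rw [← hm, h, degree_single'] at this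
    omega
  obtain ⟨j, hj⟩ := degree_one_eq hdeg
  exact ⟨i, j, by rw [hm, hj]⟩

lemma coeff_linear (d : Fin n → K) (k : Fin n) :
    coeff (Finsupp.single k 1) (∑ j, C (d j) * X j) = d k := by
  classical
  rw [coeff_sum]
  rw [Finset.sum_eq_single k]
  · rw [coeff_C_mul, coeff_X', if_pos rfl, mul_one]
  · intro j _ hj
    rw [coeff_C_mul, coeff_X',
      if_neg (fun h => hj ((Finsupp.single_left_inj one_ne_zero).mp h)), mul_zero]
  · intro h
    exact absurd (Finset.mem_univ k) h

lemma linear_form_homog (d : Fin n → K) :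
    (∑ j, C (d j) * X j : MvPolynomial (Fin n) K).IsHomogeneous 1 :=
  IsHomogeneous.sum _ _ _ fun j _ => isHomogeneous_C_mul_X (d j) j

lemma linear_eq {p : MvPolynomial (Fin n) K} (hp : p.IsHomogeneous 1) :
    p = ∑ k, C (coeff (Finsupp.single k 1) p) * X k := by
  apply MvPolynomial.ext
  intro m
  rcases eq_or_ne m.degree 1 with hd | hd
  · obtain ⟨i, rfl⟩ := degree_one_eq hd
    rw [coeff_linear]
  · rw [hp.coeff_eq_zero hd, (linear_form_homog _).coeff_eq_zero hd]

lemma linear_eq_zero_iff (d : Fin n → K) :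
    (∑ j, C (d j) * X j : MvPolynomial (Fin n) K) = 0 ↔ ∀ k, d k = 0 := by
  constructor
  · intro h k
    have := coeff_linear d k
    rw [h] at this
    simpa using this.symm
  · intro h
    simp [funext h]

lemma eval_linear (d b : Fin n → K) :
    eval b (∑ j, C (d j) * X j) = ∑ j, d j * b j := by
  simp

lemma applyOp_linear_form (c : Fin n → K) (f : MvPolynomial (Fin n) K) :
    applyOp (∑ i, C (c i) * X i) f = ∑ i, c i • pderiv i f := by
  rw [applyOp_sum]
  refine Finset.sum_congr rfl fun i _ => ?_
  rw [C_mul_X_eq_monomial, applyOp_monomial, opD_single]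

lemma applyOp_mul_linear (a c : Fin n → K) (f : MvPolynomial (Fin n) K) :
    applyOp ((∑ i, C (a i) * X i) * (∑ j, C (c j) * X j)) f
      = ∑ i, ∑ j, (a i * c j) • pderiv i (pderiv j f) := by
  rw [Finset.sum_mul_sum, applyOp_sum]
  refine Finset.sum_congr rfl fun i _ => ?_
  rw [applyOp_sum]
  refine Finset.sum_congr rfl fun j _ => ?_
  rw [C_mul_X_eq_monomial, C_mul_X_eq_monomial, monomial_mul, applyOp_monomial, opD_pair]

lemma single_add_tsub {m : Fin n →₀ ℕ} {i : Fin n} (h : 1 ≤ m i) :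
    Finsupp.single i 1 + (m - Finsupp.single i 1) = m := by
  ext j
  rw [Finsupp.add_apply, Finsupp.tsub_apply, Finsupp.single_apply]
  split_ifs with hj
  · subst hj; omega
  · omega

lemma pderiv_isHomogeneous {p : MvPolynomial (Fin n) K} {m : ℕ}
    (hp : p.IsHomogeneous (m + 1)) (i : Fin n) : (pderiv i p).IsHomogeneous m := by
  have hrw : pderiv i p
      = ∑ d ∈ p.support, monomial (d - Finsupp.single i 1) (coeff d p * d i) := by
    conv_lhs => rw [p.as_sum]
    rw [map_sum]
    exact Finset.sum_congr rfl fun d _ => pderiv_monomial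
  rw [hrw]
  refine IsHomogeneous.sum _ _ _ fun d hd => ?_
  rcases Nat.eq_zero_or_pos (d i) with h0 | h1
  · rw [h0]
    simp only [Nat.cast_zero, mul_zero, monomial_zero]
    exact isHomogeneous_zero _ _ _
  · refine isHomogeneous_monomial _ ?_
    have hdeg : d.degree = m + 1 := by
      by_contra hne
      exact Finsupp.mem_support_iff.mp hd (hp.coeff_eq_zero hne)
    have := degree_add' (Finsupp.single i 1) (d - Finsupp.single i 1)
    rw [single_add_tsub h1, degree_single'] at this
    omega

lemma second_deriv_const {g : MvPolynomial (Fin n) K} (hg : g.IsHomogeneous 1) (k : Fin n) :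
    pderiv k g = C (coeff (Finsupp.single k 1) g) := by
  conv_lhs => rw [linear_eq hg]
  rw [map_sum]
  rw [Finset.sum_eq_single k]
  · rw [pderiv_mul, pderiv_C, pderiv_X_self, zero_mul, zero_add, mul_one]
  · intro j _ hj
    rw [pderiv_mul, pderiv_C, pderiv_X_of_ne hj, zero_mul, zero_add, mul_zero]
  · intro h
    exact absurd (Finset.mem_univ k) h

lemma coeff_symm {g : MvPolynomial (Fin n) K} (hg : g.IsHomogeneous (1 + 1)) (i k : Fin n) :
    coeff (Finsupp.single k 1) (pderiv i g) = coeff (Finsupp.single i 1) (pderiv k g) := by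
  have h1 : (pderiv i g).IsHomogeneous 1 := pderiv_isHomogeneous hg i
  have h2 : (pderiv k g).IsHomogeneous 1 := pderiv_isHomogeneous hg k
  have hc := pderiv_comm' k i g
  rw [second_deriv_const h1 k, second_deriv_const h2 i] at hc
  exact C_injective _ _ hc

lemma applyOp_eq' (α f : MvPolynomial (Fin n) K) :
    applyOp α f = ∑ m ∈ α.support, α.coeff m • opD m f := rfl

lemma applyOp_homog2 {f β : MvPolynomial (Fin n) K} (hf3 : f.IsHomogeneous (1 + 1 + 1))
    (hβ : β.IsHomogeneous 2) : (applyOp β f).IsHomogeneous 1 := by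
  rw [applyOp_eq']
  refine IsHomogeneous.sum _ _ _ fun m hm => ?_
  have hdeg : m.degree = 2 := by
    by_contra hne
    exact Finsupp.mem_support_iff.mp hm (hβ.coeff_eq_zero hne)
  obtain ⟨i, j, rfl⟩ := degree_two_eq hdeg
  rw [opD_pair, smul_eq_C_mul]
  exact (pderiv_isHomogeneous (pderiv_isHomogeneous hf3 j) i).C_mul _


end Aux

/-- Let `f ∈ K[x₀,…,x_N]` be a cubic form with linearly independent
partial derivatives and `A = Q/Ann_f` the associated Artinian Gorenstein algebra.
For a linear form `L = a₀X₀ + … + a_N X_N ∈ A₁`, the multiplication map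
`μ_L : A₁ → A₂` is an isomorphism iff the Hessian determinant of `f` does not vanish
at `(a₀,…,a_N)`.  Identifying `A_k = Q_k/(Ann_f)_k`, the map `μ_L` being an
isomorphism is expressed by: (injectivity) `(Lα)(f) = 0 → α(f) = 0` for all
`α ∈ Q₁`, and (surjectivity) every class `β ∈ Q₂` modulo `Ann_f` is of the form
`Lα`, i.e. `β(f) = (Lα)(f)` for some `α ∈ Q₁`. -/
theorem SLP_iff_hessian_nonzero (K : Type*) [Field K] [CharZero K] (N : ℕ)
    (f : MvPolynomial (Fin (N + 1)) K) (hf : f.IsHomogeneous 3)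
    (hind : LinearIndependent K (fun i : Fin (N + 1) => pderiv i f))
    (a : Fin (N + 1) → K) :
    (let L : MvPolynomial (Fin (N + 1)) K := ∑ i : Fin (N + 1), C (a i) * X i
     (∀ α : MvPolynomial (Fin (N + 1)) K, α.IsHomogeneous 1 →
        applyOp (L * α) f = 0 → applyOp α f = 0) ∧
     (∀ β : MvPolynomial (Fin (N + 1)) K, β.IsHomogeneous 2 →
        ∃ α : MvPolynomial (Fin (N + 1)) K, α.IsHomogeneous 1 ∧
          applyOp β f = applyOp (L * α) f)) ↔
      eval a (Matrix.of fun i j : Fin (N + 1) => pderiv i (pderiv j f)).det ≠ 0 := by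
  dsimp only
  have hf3 : f.IsHomogeneous (1 + 1 + 1) := by simpa using hf
  have hf2 : ∀ j, (pderiv j f).IsHomogeneous (1 + 1) := fun j => pderiv_isHomogeneous hf3 j
  have hdd : ∀ i j, (pderiv i (pderiv j f)).IsHomogeneous 1 := fun i j =>
    pderiv_isHomogeneous (hf2 j) i
  set M : Matrix (Fin (N + 1)) (Fin (N + 1)) K :=
    Matrix.of fun k j => eval a (pderiv k (pderiv j f)) with hM
  have hdet : eval a (Matrix.of fun i j : Fin (N + 1) => pderiv i (pderiv j f)).det = M.det := by
    rw [RingHom.map_det]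
    rfl
  have mulVec_apply : ∀ (c : Fin (N + 1) → K) k, M.mulVec c k = ∑ j, M k j * c j :=
    fun c k => rfl
  have key : ∀ c : Fin (N + 1) → K,
      applyOp ((∑ i, C (a i) * X i) * ∑ j, C (c j) * X j) f
        = ∑ k, C (M.mulVec c k) * X k := by
    intro c
    rw [applyOp_mul_linear a c f]
    have hhom : (∑ i, ∑ j, (a i * c j) • pderiv i (pderiv j f)).IsHomogeneous 1 :=
      IsHomogeneous.sum _ _ _ fun i _ => IsHomogeneous.sum _ _ _ fun j _ => by
        rw [smul_eq_C_mul]; exact (hdd i j).C_mul _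
    rw [linear_eq hhom]
    refine Finset.sum_congr rfl fun k _ => ?_
    have hco : coeff (Finsupp.single k 1) (∑ i, ∑ j, (a i * c j) • pderiv i (pderiv j f))
        = ∑ i, ∑ j, (a i * c j) * coeff (Finsupp.single k 1) (pderiv i (pderiv j f)) := by
      rw [coeff_sum]
      refine Finset.sum_congr rfl fun i _ => ?_
      rw [coeff_sum]
      refine Finset.sum_congr rfl fun j _ => ?_
      rw [coeff_smul]
      rfl
    have hMkj : ∀ j, M k j = ∑ i, coeff (Finsupp.single i 1) (pderiv k (pderiv j f)) * a i := by
      intro j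
      show eval a (pderiv k (pderiv j f)) = _
      conv_lhs => rw [linear_eq (hdd k j)]
      rw [eval_linear]
    have : coeff (Finsupp.single k 1) (∑ i, ∑ j, (a i * c j) • pderiv i (pderiv j f))
        = M.mulVec c k := by
      rw [hco, mulVec_apply, Finset.sum_comm]
      refine Finset.sum_congr rfl fun j _ => ?_
      rw [hMkj j, Finset.sum_mul]
      refine Finset.sum_congr rfl fun i _ => ?_
      rw [coeff_symm (hf2 j) i k]
      ring
    rw [this]
  rw [hdet]
  constructor
  · rintro ⟨hinj, -⟩ h0
    obtain ⟨v, hv0, hv⟩ := (Matrix.exists_mulVec_eq_zero_iff).mpr h0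
    have h1 := hinj (∑ j, C (v j) * X j) (linear_form_homog v) (by rw [key v, hv]; simp)
    rw [applyOp_linear_form] at h1
    exact hv0 (funext (Fintype.linearIndependent_iff.mp hind v h1))
  · intro hdet0
    have hunit : IsUnit M.det := isUnit_iff_ne_zero.mpr hdet0
    constructor
    · intro α hα h0
      have hαeq := linear_eq hα
      rw [hαeq, key] at h0
      have h2 : M.mulVec (fun k => coeff (Finsupp.single k 1) α) = 0 :=
        funext ((linear_eq_zero_iff _).mp h0)
      have h3 : M⁻¹.mulVec (M.mulVec fun k => coeff (Finsupp.single k 1) α)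
          = fun k => coeff (Finsupp.single k 1) α := by
        rw [Matrix.mulVec_mulVec, Matrix.nonsing_inv_mul M hunit, Matrix.one_mulVec]
      rw [h2, Matrix.mulVec_zero] at h3
      have hc0 : ∀ k, coeff (Finsupp.single k 1) α = 0 := fun k => (congrFun h3 k).symm
      rw [hαeq, applyOp_linear_form]
      simp [hc0]
    · intro β hβ
      have hhom : (applyOp β f).IsHomogeneous 1 := applyOp_homog2 hf3 hβ
      refine ⟨∑ j, C (M⁻¹.mulVec (fun k => coeff (Finsupp.single k 1) (applyOp β f)) j) * X j,
        linear_form_homog _, ?_⟩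
      rw [key]
      have : M.mulVec (M⁻¹.mulVec fun k => coeff (Finsupp.single k 1) (applyOp β f))
          = fun k => coeff (Finsupp.single k 1) (applyOp β f) := by
        rw [Matrix.mulVec_mulVec, Matrix.mul_nonsing_inv M hunit, Matrix.one_mulVec]
      rw [this]
      exact linear_eq hhom
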